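/- Let A be a ring, let M be a Noetherian uniform right A-module, and let x be a central element of A such that Nx = 0 for some nonzero submodule N of M. Then M is Artinian if and only if the submodule Ann_M(x) = {m ∈ M : mx = 0} is Artinian. -/

import Mathlib

open MulOpposite

/-- A module is uniform if any two nonzero submodules intersect nontrivially. -/
def IsUniformMod (R : Type*) [Ring R] (M : Type*) [AddCommGroup M] [Module R M] : Prop :=
  ∀ N L : Submodule R M, N ≠ ⊥ → L ≠ ⊥ → N ⊓ L ≠ ⊥

/-- For a central element `x` of `A` and a right `A`-module `M`, the submodule
`Ann_M(x) = {m ∈ M : m·x = 0}`. -/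
def annSubmodule (A : Type*) [Ring A] (M : Type*) [AddCommGroup M] [Module Aᵐᵒᵖ M]
    (x : A) (hx : ∀ a : A, a * x = x * a) : Submodule Aᵐᵒᵖ M where
  carrier := {m | op x • m = 0}
  add_mem' := by
    intro a b ha hb
    simp only [Set.mem_setOf_eq, smul_add] at *
    rw [ha, hb, add_zero]
  zero_mem' := by simp
  smul_mem' := by
    intro c m hm
    simp only [Set.mem_setOf_eq] at *
    have hcomm : op x * c = c * op x := by
      apply unop_injective
      simp [hx c.unop]
    rw [smul_smul, hcomm, ← smul_smul, hm, smul_zero]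

/-- Let `M` be a Noetherian uniform right `A`-module and `x` a central element of `A`
killing some nonzero submodule `N` of `M`.  Then `M` is Artinian if and only if
`Ann_M(x) = {m ∈ M : m·x = 0}` is Artinian. -/
theorem artinian_iff_annihilator_artinian (A : Type*) [Ring A] (M : Type*)
    [AddCommGroup M] [Module Aᵐᵒᵖ M] (hNoeth : IsNoetherian Aᵐᵒᵖ M)
    (hUnif : IsUniformMod Aᵐᵒᵖ M) (x : A) (hx : ∀ a : A, a * x = x * a)
    (N : Submodule Aᵐᵒᵖ M) (hN : N ≠ ⊥) (hNx : ∀ m ∈ N, op x • m = 0) :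
    IsArtinian Aᵐᵒᵖ M ↔ IsArtinian Aᵐᵒᵖ (annSubmodule A M x hx) := by
  -- The linear map `ψ : m ↦ (op x) • m`, linear because `x` is central.
  have hcomm : ∀ c : Aᵐᵒᵖ, op x * c = c * op x := by
    intro c
    apply unop_injective
    simp [hx c.unop]
  set ψ : M →ₗ[Aᵐᵒᵖ] M :=
    { toFun := fun m => op x • m
      map_add' := fun a b => smul_add _ a b
      map_smul' := fun c m => by
        simp only [RingHom.id_apply, smul_smul, hcomm c] } with hψ
  have hψ_apply : ∀ m : M, ψ m = op x • m := fun m => rfl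
  have hann : (annSubmodule A M x hx : Submodule Aᵐᵒᵖ M) = LinearMap.ker ψ := by
    ext m
    simp [annSubmodule, LinearMap.mem_ker, hψ_apply]
  constructor
  · intro hArt
    exact isArtinian_submodule' _
  · intro hArt
    -- The chain of kernels of ψ^k stabilizes.
    have hmono : Monotone (fun k : ℕ => LinearMap.ker (ψ ^ k)) := by
      intro i j hij
      obtain ⟨d, rfl⟩ := Nat.exists_eq_add_of_le hij
      intro m hm
      rw [LinearMap.mem_ker] at hm ⊢
      rw [add_comm, pow_add, Module.End.mul_apply, hm, map_zero]
    obtain ⟨n₀, hn₀⟩ := monotone_stabilizes_iff_noetherian.mpr hNoeth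
      ⟨fun k => LinearMap.ker (ψ ^ k), hmono⟩
    set n := n₀ + 1 with hn
    have hstab : ∀ m, n ≤ m → LinearMap.ker (ψ ^ m) = LinearMap.ker (ψ ^ n) := by
      intro m hm
      have h1 := hn₀ m (le_trans (Nat.le_succ n₀) hm)
      have h2 := hn₀ n (Nat.le_succ n₀)
      simpa using h1.symm.trans h2
    -- ker ψ^n ⊓ range ψ^n = ⊥
    have hint : LinearMap.ker (ψ ^ n) ⊓ LinearMap.range (ψ ^ n) = ⊥ := by
      rw [eq_bot_iff]
      rintro m ⟨hk, m', rfl⟩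
      have h2 : m' ∈ LinearMap.ker (ψ ^ (n + n)) := by
        rw [LinearMap.mem_ker, pow_add, Module.End.mul_apply]
        exact LinearMap.mem_ker.mp hk
      rw [hstab (n + n) (Nat.le_add_left n n)] at h2
      rw [Submodule.mem_bot]
      exact LinearMap.mem_ker.mp h2
    -- ker ψ^n ≠ ⊥ since it contains N
    have hNker : N ≤ LinearMap.ker (ψ ^ n) := by
      intro m hm
      have h1 : ψ m = 0 := hNx m hm
      rw [LinearMap.mem_ker, hn, pow_succ, Module.End.mul_apply, h1, map_zero]
    have hker_ne : LinearMap.ker (ψ ^ n) ≠ ⊥ := by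
      intro h
      exact hN (eq_bot_iff.mpr (h ▸ hNker))
    -- By uniformity, range ψ^n = ⊥, hence ker ψ^n = ⊤.
    have hrange : LinearMap.range (ψ ^ n) = ⊥ := by
      by_contra h
      exact hUnif _ _ hker_ne h hint
    have hker_top : LinearMap.ker (ψ ^ n) = ⊤ := by
      rw [eq_top_iff]
      intro m _
      have h3 : (ψ ^ n) m ∈ LinearMap.range (ψ ^ n) := LinearMap.mem_range_self _ m
      rw [hrange, Submodule.mem_bot] at h3
      exact LinearMap.mem_ker.mpr h3
    -- Each ker ψ^k is Artinian, by induction on k.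
    have hAnnArt : IsArtinian Aᵐᵒᵖ (LinearMap.ker ψ) := hann ▸ hArt
    have hArtKer : ∀ k : ℕ, IsArtinian Aᵐᵒᵖ (LinearMap.ker (ψ ^ k)) := by
      intro k
      induction k with
      | zero =>
        have : LinearMap.ker (ψ ^ 0) = ⊥ := by
          simp [LinearMap.ker_eq_bot]
          exact fun a b h => h
        rw [this]
        infer_instance
      | succ k ih =>
        have hle : LinearMap.ker ψ ≤ LinearMap.ker (ψ ^ (k + 1)) := by
          intro m hm
          rw [LinearMap.mem_ker] at hm ⊢
          rw [pow_succ, Module.End.mul_apply, hm, map_zero]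
        -- f : ker ψ → ker ψ^{k+1}, inclusion
        set f := Submodule.inclusion hle with hf
        -- g : ker ψ^{k+1} → ker ψ^k, induced by ψ
        have hg_mem : ∀ m : LinearMap.ker (ψ ^ (k + 1)), ψ m.1 ∈ LinearMap.ker (ψ ^ k) := by
          rintro ⟨m, hm⟩
          have hm' : (ψ ^ (k + 1)) m = 0 := LinearMap.mem_ker.mp hm
          rw [pow_succ, Module.End.mul_apply] at hm'
          exact LinearMap.mem_ker.mpr hm'
        set g : LinearMap.ker (ψ ^ (k + 1)) →ₗ[Aᵐᵒᵖ] LinearMap.ker (ψ ^ k) :=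
          { toFun := fun m => ⟨ψ m.1, hg_mem m⟩
            map_add' := fun a b => Subtype.ext (map_add ψ a.1 b.1)
            map_smul' := fun c m => Subtype.ext (map_smul ψ c m.1) } with hg
        have hrk : LinearMap.range f = LinearMap.ker g := by
          ext m
          constructor
          · rintro ⟨m', rfl⟩
            exact LinearMap.mem_ker.mpr (Subtype.ext (LinearMap.mem_ker.mp m'.2))
          · intro hm
            have h1 : ψ m.1 = 0 := congrArg Subtype.val (LinearMap.mem_ker.mp hm)
            exact ⟨⟨m.1, LinearMap.mem_ker.mpr h1⟩, rfl⟩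
        exact isArtinian_of_range_eq_ker f g hrk
    -- Conclude: M = ker ψ^n is Artinian.
    have := hArtKer n
    rw [hker_top] at this
    exact isArtinian_of_linearEquiv (Submodule.topEquiv (R := Aᵐᵒᵖ) (M := M))
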